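/- (One-sided-error query bound in terms of fidelity.) Let U₁, U₂ be n×n complex unitary matrices and consider a T-query discrimination procedure with an m-dimensional ancilla, with output states Φᵢ = W_T(Uᵢ ⊗ I)W_{T−1}(Uᵢ ⊗ I)⋯W₁(Uᵢ ⊗ I)W₀φ₀ for i = 1, 2. If ε ∈ [0, 1] and there is a three-outcome POVM (Π₀, Π₁, Π₂) with ⟨Φ₂, Π₁Φ₂⟩ = ⟨Φ₁, Π₂Φ₁⟩ = 0 and ⟨Φᵢ, Π₀Φᵢ⟩ ≤ ε for i = 1, 2, then T·√(1 − F(U₁, U₂)²) ≥ √(1 − ε²). -/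

import Mathlib

open Matrix Kronecker ComplexOrder

/-- The fidelity of two unitary matrices: the infimum of `|⟨ψ, U₁†U₂ ψ⟩|` over
unit vectors `ψ`. -/
noncomputable def unitaryFidelity (n : ℕ) (U₁ U₂ : Matrix (Fin n) (Fin n) ℂ) : ℝ :=
  sInf { r : ℝ | ∃ ψ : Fin n → ℂ, star ψ ⬝ᵥ ψ = 1 ∧
    r = ‖star ψ ⬝ᵥ ((U₁ᴴ * U₂) *ᵥ ψ)‖ }

set_option linter.unusedSectionVars false
set_option maxHeartbeats 1000000

section AuxDot
variable {ι : Type*} [Fintype ι]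

private lemma dot_conj (x y : ι → ℂ) : star x ⬝ᵥ y = (starRingEnd ℂ) (star y ⬝ᵥ x) := by
  rw [star_dotProduct]; rfl

private lemma dot_self_coe (x : ι → ℂ) : star x ⬝ᵥ x = (((star x ⬝ᵥ x).re : ℝ) : ℂ) := by
  have : (star x ⬝ᵥ x).im = 0 := by
    have h := dot_conj x x
    have := congrArg Complex.im h
    simp at this
    linarith
  exact (Complex.ext_iff.mpr ⟨by simp, by simp [this]⟩)

private lemma dot_self_re_nonneg (x : ι → ℂ) : 0 ≤ (star x ⬝ᵥ x).re := by
  simp only [dotProduct, Pi.star_apply, Complex.re_sum]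
  apply Finset.sum_nonneg
  intro i _
  have : star (x i) * x i = ((Complex.normSq (x i) : ℝ) : ℂ) := by
    simp [Complex.star_def, Complex.normSq_eq_conj_mul_self]
  rw [this]
  simp [Complex.normSq_nonneg]

private lemma dot_self_re_pos {x : ι → ℂ} {i₀ : ι} (h : x i₀ ≠ 0) :
    0 < (star x ⬝ᵥ x).re := by
  simp only [dotProduct, Pi.star_apply, Complex.re_sum]
  have key : ∀ i : ι, (star (x i) * x i).re = Complex.normSq (x i) := by
    intro i
    have : star (x i) * x i = ((Complex.normSq (x i) : ℝ) : ℂ) := by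
      simp [Complex.star_def, Complex.normSq_eq_conj_mul_self]
    rw [this]; simp
  rw [Finset.sum_congr rfl fun i _ => key i]
  apply Finset.sum_pos' (fun i _ => Complex.normSq_nonneg _)
  exact ⟨i₀, Finset.mem_univ _, by simpa [Complex.normSq_pos] using h⟩

private lemma dot_eq_inner (x y : ι → ℂ) :
    star x ⬝ᵥ y = inner ℂ ((WithLp.equiv 2 (ι → ℂ)).symm x) ((WithLp.equiv 2 (ι → ℂ)).symm y) := by
  rw [PiLp.inner_apply]
  simp [dotProduct, RCLike.inner_apply, mul_comm]

private lemma dot_cs (x y : ι → ℂ) : ‖star x ⬝ᵥ y‖ ^ 2 ≤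
    (star x ⬝ᵥ x).re * (star y ⬝ᵥ y).re := by
  set X := (WithLp.equiv 2 (ι → ℂ)).symm x with hX
  set Y := (WithLp.equiv 2 (ι → ℂ)).symm y with hY
  have hx : (star x ⬝ᵥ x).re = ‖X‖ ^ 2 := by
    rw [dot_eq_inner x x, ← hX]
    have := inner_self_eq_norm_sq (𝕜 := ℂ) X
    simpa [RCLike.re_to_complex] using this
  have hy : (star y ⬝ᵥ y).re = ‖Y‖ ^ 2 := by
    rw [dot_eq_inner y y, ← hY]
    have := inner_self_eq_norm_sq (𝕜 := ℂ) Y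
    simpa [RCLike.re_to_complex] using this
  have hxy : ‖star x ⬝ᵥ y‖ ≤ ‖X‖ * ‖Y‖ := by
    rw [dot_eq_inner x y, ← hX, ← hY]
    exact norm_inner_le_norm (𝕜 := ℂ) X Y
  rw [hx, hy]
  nlinarith [norm_nonneg (star x ⬝ᵥ y), norm_nonneg X, norm_nonneg Y]

private lemma dot_mulVec_mulVec (A B : Matrix ι ι ℂ) (x y : ι → ℂ) :
    star (A *ᵥ x) ⬝ᵥ (B *ᵥ y) = star x ⬝ᵥ ((Aᴴ * B) *ᵥ y) := by
  rw [star_mulVec, dotProduct_mulVec, dotProduct_mulVec, vecMul_vecMul]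

variable [DecidableEq ι]

private lemma dot_mulVec_unitary {M : Matrix ι ι ℂ} (hM : Mᴴ * M = 1) (x y : ι → ℂ) :
    star (M *ᵥ x) ⬝ᵥ (M *ᵥ y) = star x ⬝ᵥ y := by
  rw [dot_mulVec_mulVec, hM, one_mulVec]

private lemma psd_cs {P : Matrix ι ι ℂ} (hP : P.PosSemidef) (x y : ι → ℂ) :
    ‖star x ⬝ᵥ (P *ᵥ y)‖ ^ 2 ≤
      (star x ⬝ᵥ (P *ᵥ x)).re * (star y ⬝ᵥ (P *ᵥ y)).re := by
  obtain ⟨S, hS, rfl⟩ : ∃ S : Matrix ι ι ℂ, Sᴴ = S ∧ S * S = P :=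
    by
    open scoped MatrixOrder in
    obtain ⟨X, hX, -, hXP⟩ := CFC.exists_sqrt_of_isSelfAdjoint_of_quasispectrumRestricts
      hP.isHermitian (QuasispectrumRestricts.nnreal_of_nonneg hP.nonneg)
    exact ⟨X, hX, hXP⟩
  have key : ∀ a b : ι → ℂ, star a ⬝ᵥ ((S * S) *ᵥ b) = star (S *ᵥ a) ⬝ᵥ (S *ᵥ b) := by
    intro a b
    rw [star_mulVec, dotProduct_mulVec, dotProduct_mulVec, vecMul_vecMul, hS]
  rw [key x y, key x x, key y y]
  exact dot_cs _ _

private lemma sum_dot {κ : Type*} (s : Finset κ) (x : κ → ι → ℂ) (v : ι → ℂ) :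
    (∑ i ∈ s, x i) ⬝ᵥ v = ∑ i ∈ s, x i ⬝ᵥ v := by
  simp only [dotProduct, Finset.sum_apply, Finset.sum_mul]
  exact Finset.sum_comm

private lemma dot_sum {κ : Type*} (s : Finset κ) (v : ι → ℂ) (y : κ → ι → ℂ) :
    v ⬝ᵥ (∑ j ∈ s, y j) = ∑ j ∈ s, v ⬝ᵥ y j := by
  simp only [dotProduct, Finset.sum_apply, Finset.mul_sum]
  exact Finset.sum_comm

private lemma dot_sum_orth {κ : Type*} (s : Finset κ) (x y : κ → ι → ℂ)
    (h : ∀ i ∈ s, ∀ j ∈ s, i ≠ j → star (x i) ⬝ᵥ y j = 0) :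
    star (∑ i ∈ s, x i) ⬝ᵥ (∑ j ∈ s, y j) = ∑ i ∈ s, star (x i) ⬝ᵥ y i := by
  classical
  rw [star_sum, sum_dot]
  refine Finset.sum_congr rfl fun i hi => ?_
  rw [dot_sum]
  exact Finset.sum_eq_single_of_mem i hi fun j hj hne => h i hi j hj (Ne.symm hne)

private lemma sine_real {a b c : ℝ} (ha : 0 ≤ a) (hb : 0 ≤ b)
    (ha1 : a ≤ 1) (hb1 : b ≤ 1) (hc1 : c ≤ 1)
    (h : a * b - Real.sqrt (1 - a^2) * Real.sqrt (1 - b^2) ≤ c) :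
    Real.sqrt (1 - c^2) ≤ Real.sqrt (1 - a^2) + Real.sqrt (1 - b^2) := by
  set s := Real.sqrt (1 - a^2) with hsdef
  set t := Real.sqrt (1 - b^2) with htdef
  have hs0 : 0 ≤ s := Real.sqrt_nonneg _
  have ht0 : 0 ≤ t := Real.sqrt_nonneg _
  have hs2 : s^2 = 1 - a^2 := Real.sq_sqrt (by nlinarith)
  have ht2 : t^2 = 1 - b^2 := Real.sq_sqrt (by nlinarith)
  by_cases hst : 1 ≤ s + t
  · calc Real.sqrt (1 - c^2) ≤ Real.sqrt 1 := by
          apply Real.sqrt_le_sqrt; nlinarith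
        _ = 1 := Real.sqrt_one
        _ ≤ s + t := hst
  · push_neg at hst
    have habst : s * t ≤ a * b := by nlinarith
    have hc0 : 0 ≤ c := by nlinarith
    have hst0 : 0 ≤ s * t := mul_nonneg hs0 ht0
    have h1 : (a*b - s*t)^2 ≤ c^2 := by nlinarith
    have hab2 : (a*b)^2 = (1 - s^2)*(1 - t^2) := by nlinarith
    have hab1 : a*b ≤ 1 := by nlinarith
    have h3 : s*t*(a*b - s*t) ≤ s*t := by nlinarith
    have key : 1 - c^2 ≤ (s + t)^2 := by nlinarith
    calc Real.sqrt (1 - c^2) ≤ Real.sqrt ((s+t)^2) := Real.sqrt_le_sqrt key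
      _ = s + t := by rw [Real.sqrt_sq (by linarith)]

private lemma dot_abs_le_one {x y : ι → ℂ} (hx : star x ⬝ᵥ x = 1) (hy : star y ⬝ᵥ y = 1) :
    ‖star x ⬝ᵥ y‖ ≤ 1 := by
  have := dot_cs x y
  rw [hx, hy] at this
  simp only [Complex.one_re, mul_one] at this
  nlinarith [norm_nonneg (star x ⬝ᵥ y)]

private lemma sine_triangle (u v w : ι → ℂ) (hu : star u ⬝ᵥ u = 1) (hv : star v ⬝ᵥ v = 1)
    (hw : star w ⬝ᵥ w = 1) :
    Real.sqrt (1 - (‖star u ⬝ᵥ w‖)^2) ≤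
      Real.sqrt (1 - (‖star u ⬝ᵥ v‖)^2) +
      Real.sqrt (1 - (‖star v ⬝ᵥ w‖)^2) := by
  set p := star v ⬝ᵥ u with hp
  set q := star v ⬝ᵥ w with hq
  have hpv : star u ⬝ᵥ v = (starRingEnd ℂ) p := dot_conj u v
  have hwv : star w ⬝ᵥ v = (starRingEnd ℂ) q := dot_conj w v
  set u' := u - p • v with hu'
  set w' := w - q • v with hw'
  have f1 : star u ⬝ᵥ w = (starRingEnd ℂ) p * q + star u' ⬝ᵥ w' := by
    simp only [hu', hw', star_sub, star_smul, sub_dotProduct, dotProduct_sub, smul_dotProduct,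
      dotProduct_smul, hv, hpv, ← hq, smul_eq_mul, RCLike.star_def]
    ring
  have f2 : star u' ⬝ᵥ u' = 1 - ((Complex.normSq p : ℝ) : ℂ) := by
    simp only [hu', star_sub, star_smul, sub_dotProduct, dotProduct_sub, smul_dotProduct,
      dotProduct_smul, hu, hv, hpv, ← hp, smul_eq_mul, RCLike.star_def,
      Complex.normSq_eq_conj_mul_self]
    ring
  have f3 : star w' ⬝ᵥ w' = 1 - ((Complex.normSq q : ℝ) : ℂ) := by
    simp only [hw', star_sub, star_smul, sub_dotProduct, dotProduct_sub, smul_dotProduct,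
      dotProduct_smul, hw, hv, hwv, ← hq, smul_eq_mul, RCLike.star_def,
      Complex.normSq_eq_conj_mul_self]
    ring
  set a := ‖star u ⬝ᵥ v‖ with hadef
  set b := ‖star v ⬝ᵥ w‖ with hbdef
  set c := ‖star u ⬝ᵥ w‖ with hcdef
  have hap : a = ‖p‖ := by rw [hadef, hpv, Complex.norm_conj]
  have ha0 : 0 ≤ a := norm_nonneg _
  have hb0 : 0 ≤ b := norm_nonneg _
  have ha1 : a ≤ 1 := dot_abs_le_one hu hv
  have hb1 : b ≤ 1 := dot_abs_le_one hv hw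
  have hc1 : c ≤ 1 := dot_abs_le_one hu hw
  -- bound on the residual term
  have hr2 : (‖star u' ⬝ᵥ w'‖)^2 ≤ (1 - a^2) * (1 - b^2) := by
    have := dot_cs u' w'
    rw [f2, f3] at this
    have e2 : ((1 : ℂ) - ((Complex.normSq p : ℝ) : ℂ)).re = 1 - Complex.normSq p := by simp
    have e3 : ((1 : ℂ) - ((Complex.normSq q : ℝ) : ℂ)).re = 1 - Complex.normSq q := by simp
    rw [e2, e3] at this
    have hnp : Complex.normSq p = a^2 := by rw [hap, ← Complex.sq_norm]
    have hnq : Complex.normSq q = b^2 := by rw [hbdef, hq, ← Complex.sq_norm]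
    rw [hnp, hnq] at this
    exact this
  have hr : ‖star u' ⬝ᵥ w'‖ ≤ Real.sqrt (1 - a^2) * Real.sqrt (1 - b^2) := by
    rw [← Real.sqrt_mul (by nlinarith) (1 - b^2)]
    have : ‖star u' ⬝ᵥ w'‖ = Real.sqrt ((‖star u' ⬝ᵥ w'‖)^2) := by
      rw [Real.sqrt_sq (norm_nonneg _)]
    rw [this]
    exact Real.sqrt_le_sqrt hr2
  have hmain : a * b - Real.sqrt (1 - a^2) * Real.sqrt (1 - b^2) ≤ c := by
    have h1 : ‖(starRingEnd ℂ) p * q‖ ≤ c + ‖star u' ⬝ᵥ w'‖ := by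
      have : (starRingEnd ℂ) p * q = (star u ⬝ᵥ w) - star u' ⬝ᵥ w' := by rw [f1]; ring
      rw [this]
      calc ‖(star u ⬝ᵥ w) - star u' ⬝ᵥ w'‖
          ≤ ‖star u ⬝ᵥ w‖ + ‖star u' ⬝ᵥ w'‖ := by
            exact norm_sub_le (star u ⬝ᵥ w) (star u' ⬝ᵥ w')
        _ = c + ‖star u' ⬝ᵥ w'‖ := rfl
    have h2 : ‖(starRingEnd ℂ) p * q‖ = a * b := by
      rw [norm_mul, Complex.norm_conj, ← hap, hbdef, hq]
    rw [h2] at h1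
    linarith
  exact sine_real ha0 hb0 ha1 hb1 hc1 hmain

end AuxDot


section Spectral

private lemma kron_conjTranspose {n m : ℕ} (A : Matrix (Fin n) (Fin n) ℂ)
    (B : Matrix (Fin m) (Fin m) ℂ) : (A ⊗ₖ B)ᴴ = Aᴴ ⊗ₖ Bᴴ := by
  ext ⟨a, j⟩ ⟨b, k⟩
  simp [Matrix.conjTranspose_apply, Matrix.kroneckerMap_apply, mul_comm]

private lemma kron_unitary {n m : ℕ} {A : Matrix (Fin n) (Fin n) ℂ} (hA : Aᴴ * A = 1) :
    (A ⊗ₖ (1 : Matrix (Fin m) (Fin m) ℂ))ᴴ * (A ⊗ₖ (1 : Matrix (Fin m) (Fin m) ℂ)) = 1 := by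
  rw [kron_conjTranspose, Matrix.conjTranspose_one, ← Matrix.mul_kronecker_mul, hA,
    Matrix.one_mul, Matrix.one_kronecker_one]

/-- Key spectral lemma: any numerical-range value of `V ⊗ₖ 1` is attained by `V`. -/
private lemma exists_small_vector {n m : ℕ} (V : Matrix (Fin n) (Fin n) ℂ)
    (hV1 : Vᴴ * V = 1) (hV2 : V * Vᴴ = 1) (ψ : Fin n × Fin m → ℂ) :
    ∃ ψ' : Fin n → ℂ, star ψ' ⬝ᵥ ψ' = star ψ ⬝ᵥ ψ ∧
      star ψ' ⬝ᵥ (V *ᵥ ψ') = star ψ ⬝ᵥ ((V ⊗ₖ (1 : Matrix (Fin m) (Fin m) ℂ)) *ᵥ ψ) := by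
  classical
  set M : Matrix (Fin n × Fin m) (Fin n × Fin m) ℂ := V ⊗ₖ 1 with hMdef
  have hM1 : Mᴴ * M = 1 := kron_unitary hV1
  have hM2 : M * Mᴴ = 1 := by
    have : (Vᴴ)ᴴ * Vᴴ = 1 := by rw [Matrix.conjTranspose_conjTranspose]; exact hV2
    have h := kron_unitary (m := m) this
    rw [kron_conjTranspose, Matrix.conjTranspose_conjTranspose, Matrix.conjTranspose_one] at h
    rw [hMdef, kron_conjTranspose, Matrix.conjTranspose_one]
    exact h
  set E := EuclideanSpace ℂ (Fin n × Fin m) with hE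
  let le : E ≃ₗ[ℂ] ((Fin n × Fin m) → ℂ) := WithLp.linearEquiv 2 ℂ _
  let op : Matrix (Fin n × Fin m) (Fin n × Fin m) ℂ → (E →ₗ[ℂ] E) := fun X =>
    le.symm.toLinearMap ∘ₗ X.mulVecLin ∘ₗ le.toLinearMap
  have op_apply : ∀ (X : Matrix (Fin n × Fin m) (Fin n × Fin m) ℂ) (x : E),
      le (op X x) = X *ᵥ le x := by
    intro X x
    simp [op, le]
  have inner_bridge : ∀ x y : E, (inner ℂ x y : ℂ) = star (le x) ⬝ᵥ (le y) := by
    intro x y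
    rw [dot_eq_inner]
    congr 1 <;> rfl
  -- symmetric operators
  have op_symm : ∀ {X : Matrix (Fin n × Fin m) (Fin n × Fin m) ℂ}, Xᴴ = X →
      (op X).IsSymmetric := by
    intro X hX x y
    rw [inner_bridge, inner_bridge, op_apply, op_apply, star_mulVec, dotProduct_mulVec, hX]
  set A : Matrix (Fin n × Fin m) (Fin n × Fin m) ℂ := M + Mᴴ with hAdef
  set B : Matrix (Fin n × Fin m) (Fin n × Fin m) ℂ := Complex.I • (Mᴴ - M) with hBdef
  have hAH : Aᴴ = A := by
    rw [hAdef, Matrix.conjTranspose_add, Matrix.conjTranspose_conjTranspose, add_comm]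
  have hBH : Bᴴ = B := by
    rw [hBdef, Matrix.conjTranspose_smul, Matrix.conjTranspose_sub,
      Matrix.conjTranspose_conjTranspose]
    simp only [Complex.star_def, Complex.conj_I, neg_smul, smul_sub]
    abel
  have hABcomm : A * B = B * A := by
    have hMM : M * Mᴴ = Mᴴ * M := by rw [hM1, hM2]
    rw [hAdef, hBdef]
    rw [Matrix.mul_smul, Matrix.smul_mul]
    congr 1
    simp only [Matrix.mul_sub, Matrix.sub_mul, Matrix.add_mul, Matrix.mul_add, hMM]
    abel
  have hA : (op A).IsSymmetric := op_symm hAH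
  have hB : (op B).IsSymmetric := op_symm hBH
  have hComm : Commute (op A) (op B) := by
    apply LinearMap.ext
    intro x
    apply le.injective
    show le (op A (op B x)) = le (op B (op A x))
    rw [op_apply, op_apply, op_apply, op_apply, Matrix.mulVec_mulVec, Matrix.mulVec_mulVec,
      hABcomm]
  -- eigen data
  set lam : ℂ × ℂ → ℂ := fun i => 2⁻¹ * (i.2 + Complex.I * i.1) with hlam
  have hM_eq : A + Complex.I • B = (2 : ℂ) • M := by
    rw [hAdef, hBdef, smul_smul, Complex.I_mul_I, neg_one_smul, two_smul ℂ M]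
    abel
  have eig_vec : ∀ (i : ℂ × ℂ) (x : E),
      x ∈ (Module.End.eigenspace (op A) i.2 ⊓ Module.End.eigenspace (op B) i.1 :
        Submodule ℂ E) → M *ᵥ le x = lam i • le x := by
    intro i x hx
    rw [Submodule.mem_inf] at hx
    obtain ⟨hx2, hx1⟩ := hx
    rw [Module.End.mem_eigenspace_iff] at hx2 hx1
    have h2 : A *ᵥ le x = i.2 • le x := by
      rw [← op_apply, hx2, _root_.map_smul]
    have h1 : B *ᵥ le x = i.1 • le x := by
      rw [← op_apply, hx1, _root_.map_smul]
    have := congrArg (fun (X : Matrix (Fin n × Fin m) (Fin n × Fin m) ℂ) => X *ᵥ le x) hM_eq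
    simp only [Matrix.add_mulVec, Matrix.smul_mulVec, h1, h2] at this
    have h2M : (2 : ℂ) • (M *ᵥ le x) = i.2 • le x + Complex.I • i.1 • le x := this.symm
    have : M *ᵥ le x = (2 : ℂ)⁻¹ • ((2 : ℂ) • (M *ᵥ le x)) := by
      rw [smul_smul]; norm_num
    rw [this, h2M, hlam]
    simp only [smul_add, smul_smul]
    rw [← add_smul]
    ring_nf
  -- internal direct sum decomposition
  have hInt : DirectSum.IsInternal (fun i : ℂ × ℂ =>
      (Module.End.eigenspace (op A) i.2 ⊓ Module.End.eigenspace (op B) i.1 :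
        Submodule ℂ E)) :=
    hA.directSum_isInternal_of_commute hB hComm
  have hTop : (⨆ i : ℂ × ℂ,
      (Module.End.eigenspace (op A) i.2 ⊓ Module.End.eigenspace (op B) i.1 :
        Submodule ℂ E)) = ⊤ := hInt.submodule_iSup_eq_top
  set Ψ : E := le.symm ψ with hΨ
  have hmem : Ψ ∈ (⨆ i : ℂ × ℂ,
      (Module.End.eigenspace (op A) i.2 ⊓ Module.End.eigenspace (op B) i.1 :
        Submodule ℂ E)) := by rw [hTop]; trivial
  rw [Submodule.mem_iSup_iff_exists_dfinsupp'] at hmem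
  obtain ⟨f, hf⟩ := hmem
  set s : Finset (ℂ × ℂ) := f.support with hs
  set wv : ℂ × ℂ → ((Fin n × Fin m) → ℂ) := fun i => le ((f i : E)) with hwv
  have hψsum : ψ = ∑ i ∈ s, wv i := by
    have h1 : le Ψ = ψ := le.apply_symm_apply ψ
    have h2 : (∑ i ∈ f.support, ((f i : E))) = Ψ := hf
    rw [← h1, ← h2, map_sum]
  have heig : ∀ i ∈ s, M *ᵥ wv i = lam i • wv i := fun i _ => eig_vec i _ (f i).2
  have hwne : ∀ i ∈ s, wv i ≠ 0 := by
    intro i hi h0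
    have h1 : ((f i : E)) = 0 := by
      apply le.injective
      rw [map_zero]
      exact h0
    rw [ZeroMemClass.coe_eq_zero] at h1
    exact (DFinsupp.mem_support_iff.mp hi) h1
  -- realness of eigenvalues
  have hreal : ∀ i ∈ s, i.1.im = 0 ∧ i.2.im = 0 := by
    intro i hi
    have hmem2 := (f i).2
    rw [Submodule.mem_inf] at hmem2
    have hne : ((f i : E)) ≠ 0 := by
      intro h1
      rw [ZeroMemClass.coe_eq_zero] at h1
      exact (DFinsupp.mem_support_iff.mp hi) h1
    have hv2 : Module.End.HasEigenvalue (op A) i.2 :=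
      Module.End.hasEigenvalue_of_hasEigenvector ⟨hmem2.1, hne⟩
    have hv1 : Module.End.HasEigenvalue (op B) i.1 :=
      Module.End.hasEigenvalue_of_hasEigenvector ⟨hmem2.2, hne⟩
    have r2 := hA.conj_eigenvalue_eq_self hv2
    have r1 := hB.conj_eigenvalue_eq_self hv1
    rw [Complex.conj_eq_iff_im] at r1 r2
    exact ⟨r1, r2⟩
  -- injectivity of lam on s
  have hlaminj : ∀ i ∈ s, ∀ j ∈ s, lam i = lam j → i = j := by
    intro i hi j hj he
    obtain ⟨hi1, hi2⟩ := hreal i hi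
    obtain ⟨hj1, hj2⟩ := hreal j hj
    simp only [hlam] at he
    have h2 : i.2 + Complex.I * i.1 = j.2 + Complex.I * j.1 := by
      linear_combination (2 : ℂ) * he
    have hre := congrArg Complex.re h2
    have him := congrArg Complex.im h2
    simp only [Complex.add_re, Complex.add_im, Complex.mul_re, Complex.mul_im,
      Complex.I_re, Complex.I_im, hi1, hi2, hj1, hj2] at hre him
    have e2 : i.2 = j.2 := Complex.ext (by linarith) (by rw [hi2, hj2])
    have e1 : i.1 = j.1 := Complex.ext (by linarith) (by rw [hi1, hj1])
    exact Prod.ext e1 e2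
  -- orthogonality of the big components
  have horthw : ∀ i ∈ s, ∀ j ∈ s, i ≠ j → star (wv i) ⬝ᵥ wv j = 0 := by
    intro i hi j hj hij
    have hOF := hA.orthogonalFamily_eigenspace_inf_eigenspace hB
    have h0 := hOF hij (f i) (f j)
    simp only [Submodule.coe_subtypeₗᵢ, Submodule.coe_subtype] at h0
    rw [inner_bridge] at h0
    exact h0
  -- small-space eigenvectors
  have hEx : ∀ i : ℂ × ℂ, ∃ uu : Fin n → ℂ, i ∈ s →
      (star uu ⬝ᵥ uu = 1 ∧ V *ᵥ uu = lam i • uu) := by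
    intro i
    by_cases hi : i ∈ s
    · have hne := hwne i hi
      have heq := heig i hi
      obtain ⟨⟨a₀, j₀⟩, hp⟩ := Function.ne_iff.mp hne
      set col : Fin n → ℂ := fun b => wv i (b, j₀) with hcol
      have hcoleig : V *ᵥ col = lam i • col := by
        funext b
        have h1 := congrFun heq (b, j₀)
        simp only [hMdef, Matrix.mulVec, dotProduct, Fintype.sum_prod_type,
          Matrix.kroneckerMap_apply, Matrix.one_apply, mul_ite, mul_one, mul_zero,
          ite_mul, zero_mul, Finset.sum_ite_eq, Finset.mem_univ, if_true,
          Pi.smul_apply, smul_eq_mul] at h1 ⊢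
        exact h1
      have hrpos : 0 < (star col ⬝ᵥ col).re := dot_self_re_pos (i₀ := a₀) hp
      set r : ℝ := (star col ⬝ᵥ col).re with hr
      refine ⟨((Real.sqrt r)⁻¹ : ℝ) • col, fun _ => ⟨?_, ?_⟩⟩
      · rw [star_smul, smul_dotProduct, dotProduct_smul]
        have hcc : star col ⬝ᵥ col = ((r : ℝ) : ℂ) := dot_self_coe col
        rw [hcc]
        simp only [star_trivial, Pi.star_apply, RCLike.star_def, Complex.conj_ofReal,
          smul_eq_mul, Complex.real_smul]
        push_cast
        have hne0 : ((Real.sqrt r : ℝ) : ℂ) ≠ 0 :=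
          Complex.ofReal_ne_zero.mpr (ne_of_gt (Real.sqrt_pos.mpr hrpos))
        have h2 : ((Real.sqrt r : ℝ) : ℂ) * ((Real.sqrt r : ℝ) : ℂ) = ((r : ℝ) : ℂ) := by
          rw [← Complex.ofReal_mul, Real.mul_self_sqrt hrpos.le]
        field_simp
        linear_combination -h2
      · rw [Matrix.mulVec_smul, hcoleig, smul_comm]
    · exact ⟨0, fun h => absurd h hi⟩
  choose u hu using hEx
  have hunit : ∀ i ∈ s, star (u i) ⬝ᵥ u i = 1 := fun i hi => (hu i hi).1
  have hueig : ∀ i ∈ s, V *ᵥ u i = lam i • u i := fun i hi => (hu i hi).2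
  -- orthogonality of small eigenvectors
  have horthu : ∀ i ∈ s, ∀ j ∈ s, i ≠ j → star (u i) ⬝ᵥ u j = 0 := by
    intro i hi j hj hij
    by_contra hne0
    have e1 : star (u i) ⬝ᵥ u j = star (V *ᵥ u i) ⬝ᵥ (V *ᵥ u j) :=
      (dot_mulVec_unitary hV1 _ _).symm
    rw [hueig i hi, hueig j hj, star_smul, smul_dotProduct, dotProduct_smul] at e1
    simp only [RCLike.star_def, smul_eq_mul] at e1
    have hli : (starRingEnd ℂ) (lam i) * lam i = 1 := by
      have e2 : star (lam i • u i) ⬝ᵥ (lam i • u i) = 1 := by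
        rw [← hueig i hi, dot_mulVec_unitary hV1, hunit i hi]
      rw [star_smul, smul_dotProduct, dotProduct_smul, hunit i hi] at e2
      simpa [RCLike.star_def] using e2
    have hlne : (starRingEnd ℂ) (lam i) ≠ 0 := by
      intro h0; rw [h0, zero_mul] at hli; exact zero_ne_one hli
    have hcancel : (starRingEnd ℂ) (lam i) * lam j = 1 := by
      have : ((starRingEnd ℂ) (lam i) * lam j - 1) * (star (u i) ⬝ᵥ u j) = 0 := by
        linear_combination -e1
      rcases mul_eq_zero.mp this with h | h
      · exact sub_eq_zero.mp h
      · exact absurd h hne0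
    have : lam i = lam j := by
      exact mul_left_cancel₀ hlne (hli.trans hcancel.symm)
    exact hij (hlaminj i hi j hj this)
  -- coefficients
  have hcd : ∀ i : ℂ × ℂ,
      ((Real.sqrt ((star (wv i) ⬝ᵥ wv i).re) : ℝ) : ℂ) *
        ((Real.sqrt ((star (wv i) ⬝ᵥ wv i).re) : ℝ) : ℂ) = star (wv i) ⬝ᵥ wv i := by
    intro i
    rw [← Complex.ofReal_mul, Real.mul_self_sqrt (dot_self_re_nonneg _)]
    exact (dot_self_coe _).symm
  set cc : ℂ × ℂ → ℂ := fun i => ((Real.sqrt ((star (wv i) ⬝ᵥ wv i).re) : ℝ) : ℂ) with hccdef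
  have hccconj : ∀ i, (starRingEnd ℂ) (cc i) = cc i := fun i => Complex.conj_ofReal _
  have hcd2 : ∀ i : ℂ × ℂ, cc i * cc i = star (wv i) ⬝ᵥ wv i := hcd
  refine ⟨∑ i ∈ s, cc i • u i, ?_, ?_⟩
  · rw [dot_sum_orth s _ _ (by
      intro i hi j hj hij
      rw [star_smul, smul_dotProduct, dotProduct_smul, horthu i hi j hj hij]
      simp)]
    rw [hψsum, dot_sum_orth s wv wv horthw]
    refine Finset.sum_congr rfl fun i hi => ?_
    rw [star_smul, smul_dotProduct, dotProduct_smul, hunit i hi]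
    simp only [RCLike.star_def, hccconj, smul_eq_mul, mul_one]
    exact hcd2 i
  · have hVsum : V *ᵥ (∑ i ∈ s, cc i • u i)
        = ∑ i ∈ s, cc i • (lam i • u i) := by
      simp only [← Matrix.mulVecLin_apply, map_sum, _root_.map_smul]
      refine Finset.sum_congr rfl fun i hi => ?_
      rw [Matrix.mulVecLin_apply, hueig i hi]
    rw [hVsum]
    have hMsum : M *ᵥ ψ = ∑ i ∈ s, lam i • wv i := by
      rw [hψsum]
      simp only [← Matrix.mulVecLin_apply, map_sum]
      refine Finset.sum_congr rfl fun i hi => ?_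
      rw [Matrix.mulVecLin_apply, heig i hi]
    rw [hMsum, hψsum]
    rw [dot_sum_orth s _ _ (by
      intro i hi j hj hij
      rw [star_smul, smul_dotProduct, dotProduct_smul, dotProduct_smul,
        horthu i hi j hj hij]
      simp)]
    rw [dot_sum_orth s wv _ (by
      intro i hi j hj hij
      rw [dotProduct_smul, horthw i hi j hj hij]
      simp)]
    refine Finset.sum_congr rfl fun i hi => ?_
    rw [star_smul, smul_dotProduct, dotProduct_smul, dotProduct_smul, dotProduct_smul,
      hunit i hi]
    simp only [RCLike.star_def, hccconj, smul_eq_mul, mul_one]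
    linear_combination lam i * hcd2 i

end Spectral


section Fid

private lemma fidelity_le {n m : ℕ} {U₁ U₂ : Matrix (Fin n) (Fin n) ℂ}
    (hV1 : (U₁ᴴ * U₂)ᴴ * (U₁ᴴ * U₂) = 1) (hV2 : (U₁ᴴ * U₂) * (U₁ᴴ * U₂)ᴴ = 1)
    (ψ : Fin n × Fin m → ℂ) (hψ : star ψ ⬝ᵥ ψ = 1) :
    unitaryFidelity n U₁ U₂ ≤
      ‖star ψ ⬝ᵥ (((U₁ᴴ * U₂) ⊗ₖ (1 : Matrix (Fin m) (Fin m) ℂ)) *ᵥ ψ)‖ := by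
  obtain ⟨ψ', hn, hz⟩ := exists_small_vector (U₁ᴴ * U₂) hV1 hV2 ψ
  rw [hψ] at hn
  apply csInf_le
  · exact ⟨0, by rintro r ⟨φ, -, rfl⟩; exact norm_nonneg _⟩
  · exact ⟨ψ', hn, by rw [hz]⟩

end Fid

/-- A `T`-query one-sided-error (`ε`) discrimination procedure for `U₁, U₂`
forces `T·√(1 - F(U₁,U₂)²) ≥ √(1 - ε²)`. -/
theorem one_sided_error_query_fidelity_bound (n m T : ℕ)
    (U₁ U₂ : Matrix (Fin n) (Fin n) ℂ)
    (hU₁ : U₁ ∈ Matrix.unitaryGroup (Fin n) ℂ) (hU₂ : U₂ ∈ Matrix.unitaryGroup (Fin n) ℂ)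
    (φ₀ : Fin n × Fin m → ℂ) (hφ₀ : star φ₀ ⬝ᵥ φ₀ = 1)
    (W : ℕ → Matrix (Fin n × Fin m) (Fin n × Fin m) ℂ)
    (hW : ∀ k ≤ T, W k ∈ Matrix.unitaryGroup (Fin n × Fin m) ℂ)
    (ψ₁ ψ₂ : ℕ → (Fin n × Fin m → ℂ))
    (hψ₁0 : ψ₁ 0 = W 0 *ᵥ φ₀) (hψ₂0 : ψ₂ 0 = W 0 *ᵥ φ₀)
    (hψ₁s : ∀ k < T, ψ₁ (k + 1) =
      W (k + 1) *ᵥ ((U₁ ⊗ₖ (1 : Matrix (Fin m) (Fin m) ℂ)) *ᵥ ψ₁ k))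
    (hψ₂s : ∀ k < T, ψ₂ (k + 1) =
      W (k + 1) *ᵥ ((U₂ ⊗ₖ (1 : Matrix (Fin m) (Fin m) ℂ)) *ᵥ ψ₂ k))
    (ε : ℝ) (hε : ε ∈ Set.Icc (0 : ℝ) 1)
    (P₀ P₁ P₂ : Matrix (Fin n × Fin m) (Fin n × Fin m) ℂ)
    (hP₀ : P₀.PosSemidef) (hP₁ : P₁.PosSemidef) (hP₂ : P₂.PosSemidef)
    (hsum : P₀ + P₁ + P₂ = 1)
    (he₁ : star (ψ₂ T) ⬝ᵥ (P₁ *ᵥ ψ₂ T) = 0) (he₂ : star (ψ₁ T) ⬝ᵥ (P₂ *ᵥ ψ₁ T) = 0)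
    (hi₁ : star (ψ₁ T) ⬝ᵥ (P₀ *ᵥ ψ₁ T) ≤ ((ε : ℝ) : ℂ))
    (hi₂ : star (ψ₂ T) ⬝ᵥ (P₀ *ᵥ ψ₂ T) ≤ ((ε : ℝ) : ℂ)) :
    Real.sqrt (1 - ε ^ 2) ≤
      T * Real.sqrt (1 - unitaryFidelity n U₁ U₂ ^ 2) := by
  classical
  -- unitarity facts
  have hU₁l : U₁ᴴ * U₁ = 1 := by
    have := (Matrix.mem_unitaryGroup_iff').mp hU₁
    rwa [Matrix.star_eq_conjTranspose] at this
  have hU₁r : U₁ * U₁ᴴ = 1 := by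
    have := (Matrix.mem_unitaryGroup_iff).mp hU₁
    rwa [Matrix.star_eq_conjTranspose] at this
  have hU₂l : U₂ᴴ * U₂ = 1 := by
    have := (Matrix.mem_unitaryGroup_iff').mp hU₂
    rwa [Matrix.star_eq_conjTranspose] at this
  have hU₂r : U₂ * U₂ᴴ = 1 := by
    have := (Matrix.mem_unitaryGroup_iff).mp hU₂
    rwa [Matrix.star_eq_conjTranspose] at this
  have hV1 : (U₁ᴴ * U₂)ᴴ * (U₁ᴴ * U₂) = 1 := by
    rw [Matrix.conjTranspose_mul, Matrix.conjTranspose_conjTranspose]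
    calc U₂ᴴ * U₁ * (U₁ᴴ * U₂) = U₂ᴴ * (U₁ * U₁ᴴ) * U₂ := by
          simp only [Matrix.mul_assoc]
      _ = 1 := by rw [hU₁r, Matrix.mul_one, hU₂l]
  have hV2 : (U₁ᴴ * U₂) * (U₁ᴴ * U₂)ᴴ = 1 := by
    rw [Matrix.conjTranspose_mul, Matrix.conjTranspose_conjTranspose]
    calc U₁ᴴ * U₂ * (U₂ᴴ * U₁) = U₁ᴴ * (U₂ * U₂ᴴ) * U₁ := by
          simp only [Matrix.mul_assoc]
      _ = 1 := by rw [hU₂r, Matrix.mul_one, hU₁l]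
  have hF0 : 0 ≤ unitaryFidelity n U₁ U₂ := by
    apply Real.sInf_nonneg
    rintro r ⟨φ, -, rfl⟩
    exact norm_nonneg _
  have hK1 : (U₁ ⊗ₖ (1 : Matrix (Fin m) (Fin m) ℂ))ᴴ * (U₁ ⊗ₖ 1) = 1 := kron_unitary hU₁l
  have hK2 : (U₂ ⊗ₖ (1 : Matrix (Fin m) (Fin m) ℂ))ᴴ * (U₂ ⊗ₖ 1) = 1 := kron_unitary hU₂l
  have hWu : ∀ k ≤ T, (W k)ᴴ * (W k) = 1 := by
    intro k hk
    have := (Matrix.mem_unitaryGroup_iff').mp (hW k hk)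
    rwa [Matrix.star_eq_conjTranspose] at this
  -- unit norms along the computation
  have hnorm : ∀ k, k ≤ T → star (ψ₁ k) ⬝ᵥ ψ₁ k = 1 ∧ star (ψ₂ k) ⬝ᵥ ψ₂ k = 1 := by
    intro k
    induction k with
    | zero =>
      intro _
      rw [hψ₁0, hψ₂0, dot_mulVec_unitary (hWu 0 (Nat.zero_le T)), hφ₀]
      exact ⟨rfl, rfl⟩
    | succ k ih =>
      intro hk1
      have hkT : k < T := Nat.lt_of_succ_le hk1
      obtain ⟨h1, h2⟩ := ih hkT.le
      constructor
      · rw [hψ₁s k hkT, dot_mulVec_unitary (hWu (k+1) hk1), dot_mulVec_unitary hK1, h1]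
      · rw [hψ₂s k hkT, dot_mulVec_unitary (hWu (k+1) hk1), dot_mulVec_unitary hK2, h2]
  -- hybrid argument
  have hstep : ∀ k, k ≤ T →
      Real.sqrt (1 - (‖star (ψ₁ k) ⬝ᵥ ψ₂ k‖)^2) ≤
        k * Real.sqrt (1 - unitaryFidelity n U₁ U₂ ^ 2) := by
    intro k
    induction k with
    | zero =>
      intro _
      rw [hψ₁0, hψ₂0, dot_mulVec_unitary (hWu 0 (Nat.zero_le T)), hφ₀]
      simp
    | succ k ih =>
      intro hk1
      have hkT : k < T := Nat.lt_of_succ_le hk1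
      obtain ⟨h1, h2⟩ := hnorm k hkT.le
      set x := (U₁ ⊗ₖ (1 : Matrix (Fin m) (Fin m) ℂ)) *ᵥ ψ₁ k with hxd
      set y := (U₂ ⊗ₖ (1 : Matrix (Fin m) (Fin m) ℂ)) *ᵥ ψ₁ k with hyd
      set z := (U₂ ⊗ₖ (1 : Matrix (Fin m) (Fin m) ℂ)) *ᵥ ψ₂ k with hzd
      have hx : star x ⬝ᵥ x = 1 := by rw [hxd, dot_mulVec_unitary hK1]; exact h1
      have hy : star y ⬝ᵥ y = 1 := by rw [hyd, dot_mulVec_unitary hK2]; exact h1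
      have hz : star z ⬝ᵥ z = 1 := by rw [hzd, dot_mulVec_unitary hK2]; exact h2
      have tri := sine_triangle x y z hx hy hz
      have e0 : star (ψ₁ (k+1)) ⬝ᵥ ψ₂ (k+1) = star x ⬝ᵥ z := by
        rw [hψ₁s k hkT, hψ₂s k hkT, dot_mulVec_unitary (hWu (k+1) hk1)]
      have e1 : star x ⬝ᵥ y =
          star (ψ₁ k) ⬝ᵥ (((U₁ᴴ * U₂) ⊗ₖ (1 : Matrix (Fin m) (Fin m) ℂ)) *ᵥ ψ₁ k) := by
        rw [hxd, hyd, dot_mulVec_mulVec]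
        congr 2
        rw [kron_conjTranspose, Matrix.conjTranspose_one, ← Matrix.mul_kronecker_mul]
        simp only [Matrix.one_mul]
      have e2 : star y ⬝ᵥ z = star (ψ₁ k) ⬝ᵥ ψ₂ k := by
        rw [hyd, hzd, dot_mulVec_unitary hK2]
      have hFle : unitaryFidelity n U₁ U₂ ≤ ‖star x ⬝ᵥ y‖ := by
        rw [e1]
        exact fidelity_le hV1 hV2 (ψ₁ k) h1
      have hxyle : ‖star x ⬝ᵥ y‖ ≤ 1 := dot_abs_le_one hx hy
      have t1 : Real.sqrt (1 - (‖star x ⬝ᵥ y‖)^2) ≤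
          Real.sqrt (1 - unitaryFidelity n U₁ U₂ ^ 2) := by
        apply Real.sqrt_le_sqrt
        nlinarith [hF0, hFle]
      have t2 : Real.sqrt (1 - (‖star y ⬝ᵥ z‖)^2) ≤
          k * Real.sqrt (1 - unitaryFidelity n U₁ U₂ ^ 2) := by
        rw [e2]; exact ih hkT.le
      rw [e0]
      calc Real.sqrt (1 - (‖star x ⬝ᵥ z‖)^2)
          ≤ Real.sqrt (1 - (‖star x ⬝ᵥ y‖)^2) +
            Real.sqrt (1 - (‖star y ⬝ᵥ z‖)^2) := tri
        _ ≤ Real.sqrt (1 - unitaryFidelity n U₁ U₂ ^ 2) +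
            k * Real.sqrt (1 - unitaryFidelity n U₁ U₂ ^ 2) := add_le_add t1 t2
        _ = (k + 1 : ℕ) * Real.sqrt (1 - unitaryFidelity n U₁ U₂ ^ 2) := by
            push_cast; ring
  -- measurement bound gives small overlap
  obtain ⟨h1T, h2T⟩ := hnorm T le_rfl
  have hsplit : star (ψ₁ T) ⬝ᵥ ψ₂ T =
      star (ψ₁ T) ⬝ᵥ (P₀ *ᵥ ψ₂ T) + star (ψ₁ T) ⬝ᵥ (P₁ *ᵥ ψ₂ T) +
        star (ψ₁ T) ⬝ᵥ (P₂ *ᵥ ψ₂ T) := by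
    rw [← dotProduct_add, ← dotProduct_add, ← Matrix.add_mulVec, ← Matrix.add_mulVec,
      hsum, Matrix.one_mulVec]
  have ht1 : star (ψ₁ T) ⬝ᵥ (P₁ *ᵥ ψ₂ T) = 0 := by
    have hcs := psd_cs hP₁ (ψ₁ T) (ψ₂ T)
    rw [he₁] at hcs
    simp only [Complex.zero_re, mul_zero] at hcs
    have h0 : ‖star (ψ₁ T) ⬝ᵥ (P₁ *ᵥ ψ₂ T)‖ = 0 := by
      nlinarith [norm_nonneg (star (ψ₁ T) ⬝ᵥ (P₁ *ᵥ ψ₂ T))]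
    exact norm_eq_zero.mp h0
  have ht2 : star (ψ₁ T) ⬝ᵥ (P₂ *ᵥ ψ₂ T) = 0 := by
    have hcs := psd_cs hP₂ (ψ₁ T) (ψ₂ T)
    rw [he₂] at hcs
    simp only [Complex.zero_re, zero_mul] at hcs
    have h0 : ‖star (ψ₁ T) ⬝ᵥ (P₂ *ᵥ ψ₂ T)‖ = 0 := by
      nlinarith [norm_nonneg (star (ψ₁ T) ⬝ᵥ (P₂ *ᵥ ψ₂ T))]
    exact norm_eq_zero.mp h0
  have ht0 : ‖star (ψ₁ T) ⬝ᵥ (P₀ *ᵥ ψ₂ T)‖ ≤ ε := by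
    have hcs := psd_cs hP₀ (ψ₁ T) (ψ₂ T)
    have hr1 : (star (ψ₁ T) ⬝ᵥ (P₀ *ᵥ ψ₁ T)).re ≤ ε := by
      have := (Complex.le_def.mp hi₁).1
      simpa using this
    have hr2 : (star (ψ₂ T) ⬝ᵥ (P₀ *ᵥ ψ₂ T)).re ≤ ε := by
      have := (Complex.le_def.mp hi₂).1
      simpa using this
    have hr1' : 0 ≤ (star (ψ₁ T) ⬝ᵥ (P₀ *ᵥ ψ₁ T)).re := by
      have := hP₀.re_dotProduct_nonneg (ψ₁ T)
      simpa [RCLike.re_to_complex] using this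
    have hr2' : 0 ≤ (star (ψ₂ T) ⬝ᵥ (P₀ *ᵥ ψ₂ T)).re := by
      have := hP₀.re_dotProduct_nonneg (ψ₂ T)
      simpa [RCLike.re_to_complex] using this
    nlinarith [norm_nonneg (star (ψ₁ T) ⬝ᵥ (P₀ *ᵥ ψ₂ T)), hε.1]
  have hcTle : ‖star (ψ₁ T) ⬝ᵥ ψ₂ T‖ ≤ ε := by
    rw [hsplit, ht1, ht2, add_zero, add_zero]
    exact ht0
  have hcT0 : 0 ≤ ‖star (ψ₁ T) ⬝ᵥ ψ₂ T‖ := norm_nonneg _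
  calc Real.sqrt (1 - ε^2)
      ≤ Real.sqrt (1 - (‖star (ψ₁ T) ⬝ᵥ ψ₂ T‖)^2) := by
        apply Real.sqrt_le_sqrt; nlinarith [hε.1]
    _ ≤ T * Real.sqrt (1 - unitaryFidelity n U₁ U₂ ^ 2) := hstep T le_rfl
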